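/- Let F denote the 3×3 real matrix F = [[0, 1, 0], [-1, 0, √10], [0, -√10, -6]], let E₃₃ = diag(0, 0, 1), let L > 0 be a real number, and let Σ₀ be any 3×3 real matrix. Define for t ≥ 0 the covariance matrix Σ(t) = exp(t·F)·Σ₀·exp(t·F)ᵀ + (12/L)·∫₀ᵗ exp(s·F)·E₃₃·exp(s·F)ᵀ ds. Then Σ(t) tends to (1/L)·I₃ as t → +∞. (This identifies the equilibrium distribution of the third-order Langevin dynamics with ξ = 6, γ = √10 as the Gaussian with covariance L⁻¹·I.) -/

import Mathlib

open Matrix Filter intervalIntegral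

attribute [local instance] Matrix.normedAddCommGroup Matrix.normedSpace

set_option maxHeartbeats 1000000

namespace HoldAux

noncomputable def r : ℝ := Real.sqrt 10

lemma r_sq : r * r = 10 := Real.mul_self_sqrt (by norm_num)

noncomputable def Fm : Matrix (Fin 3) (Fin 3) ℝ :=
  !![0, 1, 0; -1, 0, r; 0, -r, -6]

def Em : Matrix (Fin 3) (Fin 3) ℝ := !![0, 0, 0; 0, 0, 0; 0, 0, 1]

noncomputable def P : Fin 3 → Matrix (Fin 3) (Fin 3) ℝ :=
  ![!![5/2, 5/2, r/2; -(5/2), -(5/2), -(r/2); r/2, r/2, 1],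
    !![-2, -4, -r; 4, 8, 2*r; -r, -(2*r), -5],
    !![1/2, 3/2, r/2; -(3/2), -(9/2), -(3*r/2); r/2, 3*r/2, 5]]

def lam : Fin 3 → ℝ := ![1, 2, 3]

lemma lam_pos (j : Fin 3) : 0 < lam j := by fin_cases j <;> norm_num [lam]

lemma sumP : ∑ j, P j = 1 := by
  ext i j
  fin_cases i <;> fin_cases j <;>
    simp [P, Fin.sum_univ_three, Matrix.one_apply] <;> ring

lemma PF (j : Fin 3) : P j * Fm = (-(lam j)) • P j := by
  fin_cases j <;>
  · ext i k
    fin_cases i <;> fin_cases k <;>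
      simp [P, Fm, lam, Matrix.mul_apply, Fin.sum_univ_three] <;>
      nlinarith [r_sq]

lemma Fpow (n : ℕ) : Fm ^ n = ∑ j, (-(lam j)) ^ n • P j := by
  induction n with
  | zero => simp [sumP]
  | succ n ih =>
      rw [pow_succ, ih, Finset.sum_mul]
      refine Finset.sum_congr rfl fun j _ => ?_
      rw [smul_mul_assoc, PF, smul_smul, pow_succ]

lemma real_exp_tsum (x : ℝ) : Real.exp x = ∑' n : ℕ, x ^ n / n.factorial := by
  rw [Real.exp_eq_exp_ℝ, NormedSpace.exp_eq_tsum_div]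

lemma expF (t : ℝ) :
    NormedSpace.exp (t • Fm) = ∑ j, Real.exp (-(lam j * t)) • P j := by
  rw [NormedSpace.exp_eq_tsum ℝ]
  have hterm : ∀ n : ℕ, ((n.factorial : ℝ))⁻¹ • (t • Fm) ^ n
      = ∑ j, ((-(lam j * t)) ^ n / n.factorial) • P j := by
    intro n
    rw [smul_pow, Fpow, Finset.smul_sum, Finset.smul_sum]
    refine Finset.sum_congr rfl fun j _ => ?_
    rw [smul_smul, smul_smul]
    congr 1
    rw [show -(lam j * t) = (-(lam j)) * t by ring, mul_pow, div_eq_mul_inv]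
    ring
  calc (∑' n : ℕ, ((n.factorial : ℝ))⁻¹ • (t • Fm) ^ n)
      = ∑' n : ℕ, ∑ j, ((-(lam j * t)) ^ n / n.factorial) • P j := tsum_congr hterm
    _ = ∑ j, ∑' n : ℕ, ((-(lam j * t)) ^ n / n.factorial) • P j := by
        refine Summable.tsum_finsetSum fun j _ => ?_
        exact (Real.summable_pow_div_factorial _).smul_const _
    _ = ∑ j, Real.exp (-(lam j * t)) • P j := by
        refine Finset.sum_congr rfl fun j _ => ?_
        rw [Summable.tsum_smul_const (Real.summable_pow_div_factorial _), ← real_exp_tsum]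

lemma expand (a : Fin 3 → ℝ) (B : Matrix (Fin 3) (Fin 3) ℝ) :
    (∑ j, a j • P j) * B * (∑ k, a k • P k)ᵀ
      = ∑ j, ∑ k, (a j * a k) • (P j * B * (P k)ᵀ) := by
  rw [Matrix.transpose_sum, Finset.sum_mul, Finset.sum_mul]
  refine Finset.sum_congr rfl fun j _ => ?_
  rw [Finset.mul_sum]
  refine Finset.sum_congr rfl fun k _ => ?_
  rw [Matrix.transpose_smul, smul_mul_assoc, smul_mul_assoc, mul_smul_comm,
    smul_smul]

noncomputable def Q (j k : Fin 3) : Matrix (Fin 3) (Fin 3) ℝ :=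
  P j * Em * (P k)ᵀ

lemma Pt0 : (P 0)ᵀ = !![5/2, -(5/2), r/2; 5/2, -(5/2), r/2; r/2, -(r/2), 1] := by
  ext i j
  fin_cases i <;> fin_cases j <;> simp [P, Matrix.transpose_apply]

lemma Pt1 : (P 1)ᵀ = !![-2, 4, -r; -4, 8, -(2*r); -r, 2*r, -5] := by
  ext i j
  fin_cases i <;> fin_cases j <;> simp [P, Matrix.transpose_apply]

lemma Pt2 : (P 2)ᵀ = !![1/2, -(3/2), r/2; 3/2, -(9/2), 3*r/2; r/2, -(3*r/2), 5] := by
  ext i j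
  fin_cases i <;> fin_cases j <;> simp [P, Matrix.transpose_apply]

lemma Q00 : Q 0 0 = !![5/2, -(5/2), r/2; -(5/2), 5/2, -(r/2); r/2, -(r/2), 1] := by
  have h : Q 0 0 = P 0 * Em * (P 0)ᵀ := rfl
  rw [h, Pt0]
  ext i j
  fin_cases i <;> fin_cases j <;>
    simp [P, Em, Matrix.mul_apply, Fin.sum_univ_three] <;> nlinarith [r_sq]

lemma Q01 : Q 0 1 = !![-5, 10, -(5/2*r); 5, -10, 5/2*r; -r, 2*r, -5] := by
  have h : Q 0 1 = P 0 * Em * (P 1)ᵀ := rfl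
  rw [h, Pt1]
  ext i j
  fin_cases i <;> fin_cases j <;>
    simp [P, Em, Matrix.mul_apply, Fin.sum_univ_three] <;> nlinarith [r_sq]

lemma Q02 : Q 0 2 = !![5/2, -(15/2), 5/2*r; -(5/2), 15/2, -(5/2*r); r/2, -(3/2*r), 5] := by
  have h : Q 0 2 = P 0 * Em * (P 2)ᵀ := rfl
  rw [h, Pt2]
  ext i j
  fin_cases i <;> fin_cases j <;>
    simp [P, Em, Matrix.mul_apply, Fin.sum_univ_three] <;> nlinarith [r_sq]

lemma Q10 : Q 1 0 = !![-5, 5, -r; 10, -10, 2*r; -(5/2*r), 5/2*r, -5] := by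
  have h : Q 1 0 = P 1 * Em * (P 0)ᵀ := rfl
  rw [h, Pt0]
  ext i j
  fin_cases i <;> fin_cases j <;>
    simp [P, Em, Matrix.mul_apply, Fin.sum_univ_three] <;> nlinarith [r_sq]

lemma Q11 : Q 1 1 = !![10, -20, 5*r; -20, 40, -(10*r); 5*r, -(10*r), 25] := by
  have h : Q 1 1 = P 1 * Em * (P 1)ᵀ := rfl
  rw [h, Pt1]
  ext i j
  fin_cases i <;> fin_cases j <;>
    simp [P, Em, Matrix.mul_apply, Fin.sum_univ_three] <;> nlinarith [r_sq]

lemma Q12 : Q 1 2 = !![-5, 15, -(5*r); 10, -30, 10*r; -(5/2*r), 15/2*r, -25] := by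
  have h : Q 1 2 = P 1 * Em * (P 2)ᵀ := rfl
  rw [h, Pt2]
  ext i j
  fin_cases i <;> fin_cases j <;>
    simp [P, Em, Matrix.mul_apply, Fin.sum_univ_three] <;> nlinarith [r_sq]

lemma Q20 : Q 2 0 = !![5/2, -(5/2), r/2; -(15/2), 15/2, -(3/2*r); 5/2*r, -(5/2*r), 5] := by
  have h : Q 2 0 = P 2 * Em * (P 0)ᵀ := rfl
  rw [h, Pt0]
  ext i j
  fin_cases i <;> fin_cases j <;>
    simp [P, Em, Matrix.mul_apply, Fin.sum_univ_three] <;> nlinarith [r_sq]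

lemma Q21 : Q 2 1 = !![-5, 10, -(5/2*r); 15, -30, 15/2*r; -(5*r), 10*r, -25] := by
  have h : Q 2 1 = P 2 * Em * (P 1)ᵀ := rfl
  rw [h, Pt1]
  ext i j
  fin_cases i <;> fin_cases j <;>
    simp [P, Em, Matrix.mul_apply, Fin.sum_univ_three] <;> nlinarith [r_sq]

lemma Q22 : Q 2 2 = !![5/2, -(15/2), 5/2*r; -(15/2), 45/2, -(15/2*r); 5/2*r, -(15/2*r), 25] := by
  have h : Q 2 2 = P 2 * Em * (P 2)ᵀ := rfl
  rw [h, Pt2]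
  ext i j
  fin_cases i <;> fin_cases j <;>
    simp [P, Em, Matrix.mul_apply, Fin.sum_univ_three] <;> nlinarith [r_sq]

lemma keyId : ∑ j, ∑ k, (1/(lam j + lam k)) • Q j k
    = (1/12 : ℝ) • (1 : Matrix (Fin 3) (Fin 3) ℝ) := by
  simp only [Fin.sum_univ_three, Q00, Q01, Q02, Q10, Q11, Q12, Q20, Q21, Q22]
  norm_num [lam]
  ext i j
  fin_cases i <;> fin_cases j <;>
    simp [Matrix.one_apply] <;> ring

noncomputable def G (s : ℝ) : Matrix (Fin 3) (Fin 3) ℝ :=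
  ∑ j, ∑ k, (-(1/(lam j + lam k)) * (Real.exp (-(lam j * s)) * Real.exp (-(lam k * s)))) • Q j k

lemma hasDeriv_aux (a b : ℝ) (hab : 0 < a + b) (t : ℝ) :
    HasDerivAt (fun s : ℝ => -(1/(a+b)) * (Real.exp (-(a*s)) * Real.exp (-(b*s))))
      (Real.exp (-(a*t)) * Real.exp (-(b*t))) t := by
  have h1 : HasDerivAt (fun s : ℝ => Real.exp (-(a*s))) (-a * Real.exp (-(a*t))) t := by
    have hg : HasDerivAt (fun s : ℝ => -(a*s)) (-a) t := by
      simpa using ((hasDerivAt_id t).const_mul a).fun_neg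
    simpa [mul_comm, Function.comp_def] using (Real.hasDerivAt_exp (-(a*t))).comp t hg
  have h2 : HasDerivAt (fun s : ℝ => Real.exp (-(b*s))) (-b * Real.exp (-(b*t))) t := by
    have hg : HasDerivAt (fun s : ℝ => -(b*s)) (-b) t := by
      simpa using ((hasDerivAt_id t).const_mul b).fun_neg
    simpa [mul_comm, Function.comp_def] using (Real.hasDerivAt_exp (-(b*t))).comp t hg
  have h3 := (h1.fun_mul h2).const_mul (-(1/(a+b)))
  refine h3.congr_deriv ?_
  field_simp
  ring

lemma hasDerivG (s : ℝ) :
    HasDerivAt G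
      (∑ j, ∑ k, (Real.exp (-(lam j * s)) * Real.exp (-(lam k * s))) • Q j k) s := by
  refine HasDerivAt.fun_sum fun j _ => HasDerivAt.fun_sum fun k _ => ?_
  exact (hasDeriv_aux (lam j) (lam k) (add_pos (lam_pos j) (lam_pos k)) s).smul_const _

lemma cont_integrand :
    Continuous (fun s : ℝ =>
      ∑ j, ∑ k, (Real.exp (-(lam j * s)) * Real.exp (-(lam k * s))) • Q j k) := by
  refine continuous_finset_sum _ fun j _ => continuous_finset_sum _ fun k _ => ?_
  exact Continuous.smul (by fun_prop : Continuous fun s : ℝ => Real.exp (-(lam j * s)) * Real.exp (-(lam k * s))) continuous_const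

lemma integral_eval (t : ℝ) :
    (∫ s in (0:ℝ)..t,
        ∑ j, ∑ k, (Real.exp (-(lam j * s)) * Real.exp (-(lam k * s))) • Q j k)
      = G t - G 0 := by
  refine intervalIntegral.integral_eq_sub_of_hasDerivAt (fun s _ => hasDerivG s) ?_
  exact cont_integrand.intervalIntegrable _ _

lemma hintegrand :
    (fun s : ℝ => NormedSpace.exp (s • Fm) * Em * (NormedSpace.exp (s • Fm))ᵀ)
      = fun s => ∑ j, ∑ k, (Real.exp (-(lam j * s)) * Real.exp (-(lam k * s))) • Q j k := by
  funext s
  rw [expF, expand]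
  rfl

lemma hG0 : G 0 = -((1/12 : ℝ) • (1 : Matrix (Fin 3) (Fin 3) ℝ)) := by
  have h1 : G 0 = ∑ j, ∑ k, -((1/(lam j + lam k)) • Q j k) := by
    unfold G
    refine Finset.sum_congr rfl fun j _ => Finset.sum_congr rfl fun k _ => ?_
    rw [← neg_smul]
    norm_num
  rw [h1, ← keyId]
  simp

lemma tendsto_e (j : Fin 3) :
    Tendsto (fun t : ℝ => Real.exp (-(lam j * t))) atTop (nhds 0) := by
  have h : Tendsto (fun t : ℝ => lam j * t) atTop atTop :=
    Tendsto.const_mul_atTop (lam_pos j) tendsto_id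
  have h2 : Tendsto (fun t : ℝ => -(lam j * t)) atTop atBot :=
    tendsto_neg_atBot_iff.mpr h
  exact Real.tendsto_exp_atBot.comp h2

end HoldAux

open HoldAux

/-- For the drift matrix `F = [[0, 1, 0], [-1, 0, √10], [0, -√10, -6]]` of the
third-order Langevin dynamics with `ξ = 6`, `γ = √10`, diffusion matrix
`G Gᵀ = (12/L) E₃₃` with `E₃₃ = diag(0,0,1)`, and any initial covariance `Σ₀`,
the covariance
`Σ(t) = exp(tF) Σ₀ exp(tF)ᵀ + (12/L) ∫₀ᵗ exp(sF) E₃₃ exp(sF)ᵀ ds`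
tends to `(1/L) I₃` as `t → +∞`: the equilibrium distribution is the Gaussian
with covariance `L⁻¹ I`. -/
theorem hold_covariance_tendsto_equilibrium (L : ℝ) (hL : 0 < L)
    (Sigma0 : Matrix (Fin 3) (Fin 3) ℝ) :
    let F : Matrix (Fin 3) (Fin 3) ℝ :=
      !![0, 1, 0; -1, 0, Real.sqrt 10; 0, -Real.sqrt 10, -6]
    let E33 : Matrix (Fin 3) (Fin 3) ℝ := !![0, 0, 0; 0, 0, 0; 0, 0, 1]
    let Sigma : ℝ → Matrix (Fin 3) (Fin 3) ℝ := fun t =>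
      NormedSpace.exp (t • F) * Sigma0 * (NormedSpace.exp (t • F))ᵀ
        + (12 / L) • ∫ s in (0 : ℝ)..t,
            NormedSpace.exp (s • F) * E33 * (NormedSpace.exp (s • F))ᵀ
    Tendsto Sigma atTop (nhds ((1 / L) • (1 : Matrix (Fin 3) (Fin 3) ℝ))) := by
  intro F E33 Sigma
  have hF : F = Fm := rfl
  have hE : E33 = Em := rfl
  have hSigma : ∀ t : ℝ, Sigma t
      = (∑ j, ∑ k, (Real.exp (-(lam j * t)) * Real.exp (-(lam k * t))) •
            (P j * Sigma0 * (P k)ᵀ))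
        + (12 / L) • (G t - G 0) := by
    intro t
    show NormedSpace.exp (t • F) * Sigma0 * (NormedSpace.exp (t • F))ᵀ
        + (12 / L) • ∫ s in (0 : ℝ)..t,
            NormedSpace.exp (s • F) * E33 * (NormedSpace.exp (s • F))ᵀ = _
    rw [hF, hE, expF, expand, hintegrand, integral_eval]
  rw [show Sigma = fun t => (∑ j, ∑ k,
      (Real.exp (-(lam j * t)) * Real.exp (-(lam k * t))) • (P j * Sigma0 * (P k)ᵀ))
        + (12 / L) • (G t - G 0) from funext hSigma]
  have hzero : Tendsto (fun t : ℝ => ∑ j, ∑ k,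
      (Real.exp (-(lam j * t)) * Real.exp (-(lam k * t))) • (P j * Sigma0 * (P k)ᵀ))
      atTop (nhds 0) := by
    have h : Tendsto (fun t : ℝ => ∑ j, ∑ k,
        (Real.exp (-(lam j * t)) * Real.exp (-(lam k * t))) • (P j * Sigma0 * (P k)ᵀ))
        atTop (nhds (∑ j : Fin 3, ∑ k : Fin 3,
          ((0:ℝ) * 0) • (P j * Sigma0 * (P k)ᵀ))) := by
      refine tendsto_finset_sum _ fun j _ => tendsto_finset_sum _ fun k _ => ?_
      exact ((tendsto_e j).mul (tendsto_e k)).smul_const _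
    simpa using h
  have hGt : Tendsto G atTop (nhds 0) := by
    have h : Tendsto G atTop (nhds (∑ j : Fin 3, ∑ k : Fin 3,
        (-(1/(lam j + lam k)) * ((0:ℝ) * 0)) • Q j k)) := by
      refine tendsto_finset_sum _ fun j _ => tendsto_finset_sum _ fun k _ => ?_
      exact (((tendsto_e j).mul (tendsto_e k)).const_mul _).smul_const _
    simpa using h
  have hsecond : Tendsto (fun t : ℝ => (12 / L) • (G t - G 0)) atTop
      (nhds ((1 / L) • (1 : Matrix (Fin 3) (Fin 3) ℝ))) := by
    have hc : Tendsto (fun _ : ℝ => G 0) atTop (nhds (G 0)) := tendsto_const_nhds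
    have h := (hGt.sub hc).const_smul (12 / L)
    have heq : (12 / L) • ((0 : Matrix (Fin 3) (Fin 3) ℝ) - G 0)
        = (1 / L) • (1 : Matrix (Fin 3) (Fin 3) ℝ) := by
      rw [hG0, zero_sub, neg_neg, smul_smul]
      congr 1
      field_simp
    rwa [heq] at h
  simpa using hzero.add hsecond
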